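/- Let H₁ be a complex Hilbert space, (Ω, μ) a measure space, ζ : Ω → ℂ measurable, and K : Ω → B(H₁) Bochner integrable with w := ∫ ‖K(ω)‖/(1+|ζ(ω)|) dμ(ω) < ∞. Then for every z in the open set ℂ \ closure(range ζ) the Bochner integral V₁(z) := ∫ (z/(z−ζ(ω)))·K(ω) dμ(ω) exists (the integrand is Bochner integrable), and the map z ↦ V₁(z) is holomorphic (complex differentiable) on ℂ \ closure(range ζ) with values in the bounded operators on H₁. -/

import Mathlib

open MeasureTheory Metric

set_option maxHeartbeats 1000000 in
/-- Lemma 1.1 (well-definedness and holomorphy of the analytically continued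
function `V₁(z) = ∫ z/(z-ζ(ω)) K(ω) dμ(ω)` outside the closure of the contour). -/
theorem V1_integrable_and_holomorphic
    {H : Type*} [NormedAddCommGroup H] [InnerProductSpace ℂ H] [CompleteSpace H]
    {Ω : Type*} [MeasurableSpace Ω] (μ : Measure Ω)
    (ζ : Ω → ℂ) (hζ : Measurable ζ)
    (K : Ω → H →L[ℂ] H) (hK : Integrable K μ)
    (hw : Integrable (fun ω => ‖K ω‖ / (1 + ‖ζ ω‖)) μ) :
    (∀ z ∈ (closure (Set.range ζ))ᶜ,
        Integrable (fun ω => (z / (z - ζ ω)) • K ω) μ) ∧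
    DifferentiableOn ℂ (fun z : ℂ => ∫ ω, (z / (z - ζ ω)) • K ω ∂μ)
      (closure (Set.range ζ))ᶜ := by
  have hopen : IsOpen (closure (Set.range ζ))ᶜ := isClosed_closure.isOpen_compl
  -- measurability of the integrand, for any fixed z
  have hmeas : ∀ z : ℂ, AEStronglyMeasurable (fun ω => (z / (z - ζ ω)) • K ω) μ := by
    intro z
    exact ((measurable_const.div (measurable_const.sub hζ)).aestronglyMeasurable).smul hK.1
  -- distance bound: points of a ball inside the complement are far from ζ ω
  have hdist : ∀ (z : ℂ) (δ : ℝ), ball z δ ⊆ (closure (Set.range ζ))ᶜ →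
      ∀ ω, δ ≤ ‖z - ζ ω‖ := by
    intro z δ hsub ω
    by_contra h
    push_neg at h
    have : ζ ω ∈ ball z δ := by
      rw [mem_ball, dist_comm, Complex.dist_eq]
      exact h
    exact hsub this (subset_closure (Set.mem_range_self ω))
  -- integrability at a fixed point
  have hint : ∀ z ∈ (closure (Set.range ζ))ᶜ,
      Integrable (fun ω => (z / (z - ζ ω)) • K ω) μ := by
    intro z hz
    obtain ⟨δ, hδ, hsub⟩ := Metric.isOpen_iff.1 hopen z hz
    refine Integrable.mono' ((hK.norm.const_mul (‖z‖ / δ))) (hmeas z)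
      (Filter.Eventually.of_forall fun ω => ?_)
    have h1 : δ ≤ ‖z - ζ ω‖ := hdist z δ hsub ω
    have h2 : (0:ℝ) < ‖z - ζ ω‖ := lt_of_lt_of_le hδ h1
    rw [norm_smul]
    have : ‖z / (z - ζ ω)‖ ≤ ‖z‖ / δ := by
      rw [norm_div]
      exact div_le_div_of_nonneg_left (norm_nonneg z) hδ h1
    calc ‖z / (z - ζ ω)‖ * ‖K ω‖ ≤ (‖z‖ / δ) * ‖K ω‖ :=
          mul_le_mul_of_nonneg_right this (norm_nonneg _)
      _ = ‖z‖ / δ * ‖K ω‖ := rfl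
  refine ⟨hint, ?_⟩
  intro z₀ hz₀
  obtain ⟨δ, hδ, hsub⟩ := Metric.isOpen_iff.1 hopen z₀ hz₀
  -- for z in ball z₀ (δ/2), |z - ζ ω| ≥ δ/2
  have hfar : ∀ z ∈ ball z₀ (δ/2), ∀ ω, δ/2 ≤ ‖z - ζ ω‖ := by
    intro z hzb ω
    refine hdist z (δ/2) (fun y hy => hsub ?_) ω
    rw [mem_ball] at *
    calc dist y z₀ ≤ dist y z + dist z z₀ := dist_triangle _ _ _
      _ < δ/2 + δ/2 := add_lt_add hy hzb
      _ = δ := by ring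
  set C : ℝ := (1 + (‖z₀‖ + δ) / (δ/2)) * (2/δ) with hC
  have hδ2 : (0:ℝ) < δ/2 := by linarith
  -- derivative candidate and its bound
  have key := hasDerivAt_integral_of_dominated_loc_of_deriv_le
    (F := fun z ω => (z / (z - ζ ω)) • K ω)
    (F' := fun z ω => (-(ζ ω) / (z - ζ ω)^2) • K ω)
    (bound := fun ω => C * ‖K ω‖) (ball_mem_nhds z₀ hδ2)
    (Filter.Eventually.of_forall fun z => hmeas z)
    (hint z₀ hz₀)
    ((hζ.neg.div ((measurable_const.sub hζ).pow measurable_const)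
        |>.aestronglyMeasurable).smul hK.1)
    ?_ (hK.norm.const_mul C) ?_
  · exact key.2.differentiableAt.differentiableWithinAt
  · -- norm bound on the derivative
    refine Filter.Eventually.of_forall fun ω => fun z hz => ?_
    have h1 : δ/2 ≤ ‖z - ζ ω‖ := hfar z hz ω
    have h2 : (0:ℝ) < ‖z - ζ ω‖ := lt_of_lt_of_le hδ2 h1
    have hzabs : ‖z‖ ≤ ‖z₀‖ + δ := by
      have : dist z z₀ < δ/2 := mem_ball.1 hz
      rw [Complex.dist_eq] at this
      calc ‖z‖ = ‖z - z₀ + z₀‖ := by rw [sub_add_cancel]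
        _ ≤ ‖z - z₀‖ + ‖z₀‖ := norm_add_le _ _
        _ ≤ ‖z₀‖ + δ := by linarith
    rw [norm_smul]
    have hfact : ‖-(ζ ω) / (z - ζ ω)^2‖ ≤ C := by
      rw [norm_div, norm_neg, norm_pow]
      have habs : ‖ζ ω‖ ≤ ‖z - ζ ω‖ + ‖z‖ := by
        calc ‖ζ ω‖ = ‖-(z - ζ ω) + z‖ := by
              rw [neg_sub, sub_add_cancel]
          _ ≤ ‖-(z - ζ ω)‖ + ‖z‖ := norm_add_le _ _
          _ = ‖z - ζ ω‖ + ‖z‖ := by rw [norm_neg]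
      have step1 : ‖ζ ω‖ / ‖z - ζ ω‖ ≤ 1 + (‖z₀‖ + δ) / (δ/2) := by
        rw [div_le_iff₀ h2]
        have : (‖z₀‖ + δ) / (δ/2) * ‖z - ζ ω‖
            ≥ ‖z‖ := by
          rw [ge_iff_le, div_mul_eq_mul_div, le_div_iff₀ hδ2]
          have hz0 : (0:ℝ) ≤ ‖z₀‖ + δ := by positivity
          calc ‖z‖ * (δ/2) ≤ (‖z₀‖ + δ) * (δ/2) :=
                mul_le_mul_of_nonneg_right hzabs hδ2.le
            _ ≤ (‖z₀‖ + δ) * ‖z - ζ ω‖ :=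
                mul_le_mul_of_nonneg_left h1 hz0
        nlinarith [habs]
      have step2 : 1 / ‖z - ζ ω‖ ≤ 2/δ := by
        rw [div_le_div_iff₀ h2 hδ]
        linarith
      have : ‖ζ ω‖ / ‖z - ζ ω‖ ^ 2
          = (‖ζ ω‖ / ‖z - ζ ω‖) * (1 / ‖z - ζ ω‖) := by
        rw [pow_two, div_mul_eq_div_div, div_eq_mul_one_div]
      rw [this, hC]
      have hnn : (0:ℝ) ≤ ‖ζ ω‖ / ‖z - ζ ω‖ := by positivity
      have hnn2 : (0:ℝ) ≤ 1 + (‖z₀‖ + δ) / (δ/2) := by positivity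
      exact mul_le_mul step1 step2 (by positivity) hnn2
    exact mul_le_mul_of_nonneg_right hfact (norm_nonneg _)
  · -- differentiability of the integrand
    refine Filter.Eventually.of_forall fun ω => fun z hz => ?_
    have h1 : δ/2 ≤ ‖z - ζ ω‖ := hfar z hz ω
    have hne : z - ζ ω ≠ 0 := by
      intro h
      rw [h, norm_zero] at h1
      linarith
    have hd : HasDerivAt (fun w : ℂ => w / (w - ζ ω))
        ((1 * (z - ζ ω) - z * 1) / (z - ζ ω)^2) z :=
      (hasDerivAt_id z).div ((hasDerivAt_id z).sub_const (ζ ω)) hne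
    have heq : (1 * (z - ζ ω) - z * 1) / (z - ζ ω)^2 = -(ζ ω) / (z - ζ ω)^2 := by
      ring_nf
    rw [heq] at hd
    exact hd.smul_const (K ω)
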